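/- Suppose that for each t < m and each action vector a ∈ ℝ^n, (1/ε)·c_t(εa) converges, as ε ↓ 0, to γ_t^+·a^+ + γ_t^−·a^− (a monotone limit, by convexity), where γ_t^+, γ_t^− are 𝓕_t-measurable with values in [0,∞]^n. For an admissible policy a define the linearized gain G̃(a) := Σ_{t<m} [ a_t·(H_T^{(t)} − H_t^{(t)}) − γ_t^+·a_t^+ − γ_t^−·a_t^− ]. Then sup over admissible policies a of E[G̃(a)] equals 0 if and only if sup over admissible policies a of E[G(a)] equals 0. -/

import Mathlib

open MeasureTheory ENNReal Real Filter Set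

noncomputable section

variable {Ω : Type*}

/-- A policy: at each time `t < m`, an `F t`-measurable, essentially bounded action in `ℝ^n`. -/
def IsPolicy {mΩ : MeasurableSpace Ω} (P : Measure Ω) (m n : ℕ) (F : ℕ → MeasurableSpace Ω)
    (a : ℕ → Ω → Fin n → ℝ) : Prop :=
  ∀ t < m, Measurable[F t] (a t) ∧ ∃ C : ℝ, ∀ᵐ ω ∂P, ∀ i, |a t ω i| ≤ C

/-- Terminal gain of a policy under generalized transaction costs `c`. -/
def genGain (m n : ℕ) (Hmid HT : ℕ → Ω → Fin n → ℝ) (c : ℕ → Ω → (Fin n → ℝ) → ℝ≥0∞)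
    (a : ℕ → Ω → Fin n → ℝ) (ω : Ω) : ℝ :=
  ∑ t ∈ Finset.range m, ((∑ i, a t ω i * (HT t ω i - Hmid t ω i)) - (c t ω (a t ω)).toReal)

/-- A policy is admissible for generalized costs `c` if it is a policy, its cost is a.s. finite
at every trading time, and the total cost is integrable. -/
def GenAdmissible {mΩ : MeasurableSpace Ω} (P : Measure Ω) (m n : ℕ)
    (F : ℕ → MeasurableSpace Ω) (c : ℕ → Ω → (Fin n → ℝ) → ℝ≥0∞)
    (a : ℕ → Ω → Fin n → ℝ) : Prop :=
  IsPolicy P m n F a ∧ (∀ t < m, ∀ᵐ ω ∂P, c t ω (a t ω) ≠ ∞) ∧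
    Integrable (fun ω => ∑ t ∈ Finset.range m, (c t ω (a t ω)).toReal) P

/-- Terminal gain of a policy under proportional costs with possibly infinite spreads
(valued in `[0,∞]`), using the convention `∞ · 0 = 0`. -/
def eGain (m n : ℕ) (Hmid HT : ℕ → Ω → Fin n → ℝ) (γp γm : ℕ → Ω → Fin n → ℝ≥0∞)
    (a : ℕ → Ω → Fin n → ℝ) (ω : Ω) : ℝ :=
  ∑ t ∈ Finset.range m, ((∑ i, a t ω i * (HT t ω i - Hmid t ω i))
    - ∑ i, ((γp t ω i * ENNReal.ofReal (max (a t ω i) 0)).toReal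
        + (γm t ω i * ENNReal.ofReal (max (-a t ω i) 0)).toReal))

/-- From convexity with value 0 at 0: `f(ε•x)/ε` is monotone in `ε > 0`. -/
lemma scale_div_mono {n : ℕ} (f : (Fin n → ℝ) → ℝ≥0∞)
    (hconv : ∀ x y : Fin n → ℝ, ∀ s : ℝ, 0 ≤ s → s ≤ 1 →
      f (s • x + (1 - s) • y) ≤ ENNReal.ofReal s * f x + ENNReal.ofReal (1 - s) * f y)
    (h0 : f 0 = 0) (x : Fin n → ℝ) {ε δ : ℝ} (hε : 0 < ε) (hεδ : ε ≤ δ) :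
    f (ε • x) / ENNReal.ofReal ε ≤ f (δ • x) / ENNReal.ofReal δ := by
  have hδ : 0 < δ := hε.trans_le hεδ
  set s := ε / δ with hs
  have hs0 : 0 ≤ s := div_nonneg hε.le hδ.le
  have hs1 : s ≤ 1 := (div_le_one hδ).mpr hεδ
  have key : f (ε • x) ≤ ENNReal.ofReal s * f (δ • x) := by
    have := hconv (δ • x) 0 s hs0 hs1
    rw [smul_zero, add_zero, smul_smul, h0, mul_zero, add_zero] at this
    rwa [div_mul_cancel₀ ε hδ.ne'] at this
  calc f (ε • x) / ENNReal.ofReal ε ≤ ENNReal.ofReal s * f (δ • x) / ENNReal.ofReal ε :=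
        ENNReal.div_le_div_right key _
    _ = f (δ • x) / ENNReal.ofReal δ := by
        rw [hs, ENNReal.ofReal_div_of_pos hδ, ENNReal.div_eq_inv_mul, ENNReal.div_eq_inv_mul,
          ENNReal.div_eq_inv_mul, ← mul_assoc, ← mul_assoc]
        congr 1
        rw [mul_comm (ENNReal.ofReal ε)⁻¹, mul_assoc,
          ENNReal.inv_mul_cancel (by simpa using hε) ENNReal.ofReal_ne_top, mul_one]

lemma gamma_le_of_tendsto {n : ℕ} (f : (Fin n → ℝ) → ℝ≥0∞)
    (hconv : ∀ x y : Fin n → ℝ, ∀ s : ℝ, 0 ≤ s → s ≤ 1 →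
      f (s • x + (1 - s) • y) ≤ ENNReal.ofReal s * f x + ENNReal.ofReal (1 - s) * f y)
    (h0 : f 0 = 0) (x : Fin n → ℝ) {g : ℝ≥0∞}
    (hd : Filter.Tendsto (fun ε : ℝ => f (ε • x) / ENNReal.ofReal ε)
      (nhdsWithin 0 (Set.Ioi 0)) (nhds g)) : g ≤ f x := by
  refine le_of_tendsto hd ?_
  filter_upwards [Ioc_mem_nhdsGT_of_mem (by simp : (0:ℝ) ∈ Ico (0:ℝ) 1)] with ε hε
  have := scale_div_mono f hconv h0 x hε.1 hε.2
  simpa [ENNReal.ofReal_one] using this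

def linP (m n : ℕ) (Hmid HT : ℕ → Ω → Fin n → ℝ) (a : ℕ → Ω → Fin n → ℝ) (ω : Ω) : ℝ :=
  ∑ t ∈ Finset.range m, ∑ i, a t ω i * (HT t ω i - Hmid t ω i)

def costE (m : ℕ) (c : ℕ → Ω → (Fin n → ℝ) → ℝ≥0∞) (a : ℕ → Ω → Fin n → ℝ) (ω : Ω) : ℝ≥0∞ :=
  ∑ t ∈ Finset.range m, c t ω (a t ω)

def gammaE (m n : ℕ) (γp γm : ℕ → Ω → Fin n → ℝ≥0∞) (a : ℕ → Ω → Fin n → ℝ) (ω : Ω) : ℝ≥0∞ :=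
  ∑ t ∈ Finset.range m, ∑ i, (γp t ω i * ENNReal.ofReal (max (a t ω i) 0)
    + γm t ω i * ENNReal.ofReal (max (-a t ω i) 0))

lemma repr_lemma
    {mΩ : MeasurableSpace Ω} (P : Measure Ω) [IsProbabilityMeasure P]
    (m n : ℕ) (F : ℕ → MeasurableSpace Ω) (hF_le : ∀ t, F t ≤ mΩ)
    (Hmid HT : ℕ → Ω → Fin n → ℝ)
    (hHmid_meas : ∀ t < m, Measurable[F t] (Hmid t))
    (hHT_meas : ∀ t < m, Measurable[F m] (HT t))
    (hHmid_bdd : ∀ t < m, ∃ C : ℝ, ∀ᵐ ω ∂P, ∀ i, |Hmid t ω i| ≤ C)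
    (hHT_bdd : ∀ t < m, ∃ C : ℝ, ∀ᵐ ω ∂P, ∀ i, |HT t ω i| ≤ C)
    (c : ℕ → Ω → (Fin n → ℝ) → ℝ≥0∞)
    (hc_convex : ∀ t < m, ∀ ω, ∀ x y : Fin n → ℝ, ∀ s : ℝ, 0 ≤ s → s ≤ 1 →
      c t ω (s • x + (1 - s) • y) ≤ ENNReal.ofReal s * c t ω x + ENNReal.ofReal (1 - s) * c t ω y)
    (hc_zero : ∀ t < m, ∀ ω, c t ω 0 = 0)
    (γp γm : ℕ → Ω → Fin n → ℝ≥0∞)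
    (hγp_meas : ∀ t < m, Measurable[F t] (γp t)) (hγm_meas : ∀ t < m, Measurable[F t] (γm t))
    (hderiv : ∀ t < m, ∀ ω, ∀ x : Fin n → ℝ,
      Tendsto (fun ε : ℝ => c t ω (ε • x) / ENNReal.ofReal ε) (nhdsWithin 0 (Set.Ioi 0))
        (nhds (∑ i, (γp t ω i * ENNReal.ofReal (max (x i) 0)
          + γm t ω i * ENNReal.ofReal (max (-x i) 0)))))
    (a : ℕ → Ω → Fin n → ℝ) (ha : GenAdmissible P m n F c a) :
    Integrable (linP m n Hmid HT a) P ∧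
    (∫ ω, genGain m n Hmid HT c a ω ∂P
      = (∫ ω, linP m n Hmid HT a ω ∂P) - (∫⁻ ω, costE m c a ω ∂P).toReal) ∧
    (∫ ω, eGain m n Hmid HT γp γm a ω ∂P
      = (∫ ω, linP m n Hmid HT a ω ∂P) - (∫⁻ ω, gammaE m n γp γm a ω ∂P).toReal) ∧
    (∫⁻ ω, gammaE m n γp γm a ω ∂P) ≤ (∫⁻ ω, costE m c a ω ∂P) ∧
    (∫⁻ ω, costE m c a ω ∂P) ≠ ∞ := by
  have haM : ∀ t < m, Measurable (a t) := fun t ht => ((ha.1 t ht).1).mono (hF_le t) le_rfl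
  -- integrability of the linear part
  have hlin_int : Integrable (linP m n Hmid HT a) P := by
    apply integrable_finset_sum
    intro t ht'
    have ht := Finset.mem_range.mp ht'
    apply integrable_finset_sum
    intro i _
    obtain ⟨Ca, hCa⟩ := (ha.1 t ht).2
    obtain ⟨CH, hCH⟩ := hHT_bdd t ht
    obtain ⟨CM, hCM⟩ := hHmid_bdd t ht
    have hmeas : Measurable fun ω => a t ω i * (HT t ω i - Hmid t ω i) := by
      have h1 : Measurable fun ω => a t ω i := (measurable_pi_apply i).comp (haM t ht)
      have h2 : Measurable fun ω => HT t ω i :=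
        (measurable_pi_apply i).comp ((hHT_meas t ht).mono (hF_le m) le_rfl)
      have h3 : Measurable fun ω => Hmid t ω i :=
        (measurable_pi_apply i).comp ((hHmid_meas t ht).mono (hF_le t) le_rfl)
      exact h1.mul (h2.sub h3)
    refine ⟨hmeas.aestronglyMeasurable, HasFiniteIntegral.of_bounded (C := Ca * (CH + CM)) ?_⟩
    filter_upwards [hCa, hCH, hCM] with ω h1 h2 h3
    have : |a t ω i * (HT t ω i - Hmid t ω i)| ≤ Ca * (CH + CM) := by
      rw [abs_mul]
      refine mul_le_mul (h1 i) ?_ (abs_nonneg _) ((abs_nonneg _).trans (h1 i))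
      calc |HT t ω i - Hmid t ω i| ≤ |HT t ω i| + |Hmid t ω i| := abs_sub _ _
        _ ≤ CH + CM := add_le_add (h2 i) (h3 i)
    rw [Real.norm_eq_abs]; exact this
  -- a.e. finiteness of the costs
  have hfin : ∀ᵐ ω ∂P, ∀ t, t < m → c t ω (a t ω) ≠ ∞ := by
    rw [ae_all_iff]
    intro t
    by_cases ht : t < m
    · exact (ha.2.1 t ht).mono fun ω hω _ => hω
    · exact Filter.Eventually.of_forall fun ω h' => absurd h' ht
  have hF0fin : ∀ᵐ ω ∂P, costE m c a ω ≠ ∞ :=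
    hfin.mono fun ω h => ENNReal.sum_ne_top.mpr fun t ht => h t (Finset.mem_range.mp ht)
  -- the nonnegative cost in real form
  have hcost_nn : 0 ≤ᵐ[P] fun ω => ∑ t ∈ Finset.range m, (c t ω (a t ω)).toReal :=
    Filter.Eventually.of_forall fun ω =>
      Finset.sum_nonneg fun t _ => ENNReal.toReal_nonneg
  have hcost_eq : ∀ᵐ ω ∂P,
      ENNReal.ofReal (∑ t ∈ Finset.range m, (c t ω (a t ω)).toReal) = costE m c a ω := by
    filter_upwards [hfin] with ω h
    rw [ENNReal.ofReal_sum_of_nonneg fun t _ => ENNReal.toReal_nonneg]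
    exact Finset.sum_congr rfl fun t ht =>
      ENNReal.ofReal_toReal (h t (Finset.mem_range.mp ht))
  have hlcost : ∫⁻ ω, costE m c a ω ∂P
      = ENNReal.ofReal (∫ ω, ∑ t ∈ Finset.range m, (c t ω (a t ω)).toReal ∂P) := by
    rw [ofReal_integral_eq_lintegral_ofReal ha.2.2 hcost_nn]
    exact lintegral_congr_ae (hcost_eq.mono fun ω h => h.symm)
  have hF0 : (∫⁻ ω, costE m c a ω ∂P) ≠ ∞ := by rw [hlcost]; exact ENNReal.ofReal_ne_top
  have hIcost : ∫ ω, ∑ t ∈ Finset.range m, (c t ω (a t ω)).toReal ∂P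
      = (∫⁻ ω, costE m c a ω ∂P).toReal := by
    rw [hlcost, ENNReal.toReal_ofReal (integral_nonneg_of_ae hcost_nn)]
  -- genGain representation
  have hgen : ∫ ω, genGain m n Hmid HT c a ω ∂P
      = (∫ ω, linP m n Hmid HT a ω ∂P) - (∫⁻ ω, costE m c a ω ∂P).toReal := by
    have : ∀ ω, genGain m n Hmid HT c a ω
        = linP m n Hmid HT a ω - ∑ t ∈ Finset.range m, (c t ω (a t ω)).toReal := by
      intro ω; rw [genGain, linP, ← Finset.sum_sub_distrib]
    simp only [this]
    rw [integral_sub hlin_int ha.2.2, hIcost]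
  -- pointwise: gamma term ≤ cost
  have hterm_le : ∀ t < m, ∀ ω, (∑ i, (γp t ω i * ENNReal.ofReal (max (a t ω i) 0)
      + γm t ω i * ENNReal.ofReal (max (-a t ω i) 0))) ≤ c t ω (a t ω) := by
    intro t ht ω
    have := gamma_le_of_tendsto (c t ω) (hc_convex t ht ω) (hc_zero t ht ω) (a t ω)
      (hderiv t ht ω (a t ω))
    simpa using this
  have hg_le : ∀ ω, gammaE m n γp γm a ω ≤ costE m c a ω := fun ω =>
    Finset.sum_le_sum fun t ht => hterm_le t (Finset.mem_range.mp ht) ω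
  have hgfin : ∀ᵐ ω ∂P, gammaE m n γp γm a ω ≠ ∞ :=
    hF0fin.mono fun ω h => fun hg => h (top_le_iff.mp (hg ▸ hg_le ω))
  have hg_meas : Measurable (gammaE m n γp γm a) := by
    apply Finset.measurable_sum
    intro t ht'
    have ht := Finset.mem_range.mp ht'
    apply Finset.measurable_sum
    intro i _
    have hai : Measurable fun ω => a t ω i := (measurable_pi_apply i).comp (haM t ht)
    have hγpi : Measurable fun ω => γp t ω i :=
      (measurable_pi_apply i).comp ((hγp_meas t ht).mono (hF_le t) le_rfl)
    have hγmi : Measurable fun ω => γm t ω i :=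
      (measurable_pi_apply i).comp ((hγm_meas t ht).mono (hF_le t) le_rfl)
    exact (hγpi.mul (ENNReal.measurable_ofReal.comp (hai.max measurable_const))).add
      (hγmi.mul (ENNReal.measurable_ofReal.comp (hai.neg.max measurable_const)))
  -- real form of gamma part
  have hγreal : ∀ᵐ ω ∂P, (∑ t ∈ Finset.range m,
      ∑ i, ((γp t ω i * ENNReal.ofReal (max (a t ω i) 0)).toReal
        + (γm t ω i * ENNReal.ofReal (max (-a t ω i) 0)).toReal))
      = (gammaE m n γp γm a ω).toReal := by
    filter_upwards [hgfin] with ω h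
    rw [gammaE] at h ⊢
    have hterm : ∀ t ∈ Finset.range m, ∀ i : Fin n,
        (γp t ω i * ENNReal.ofReal (max (a t ω i) 0)
          + γm t ω i * ENNReal.ofReal (max (-a t ω i) 0)) ≠ ∞ := by
      intro t ht i
      have h1 := ENNReal.lt_top_of_sum_ne_top h ht
      have h2 := ENNReal.lt_top_of_sum_ne_top h1.ne (Finset.mem_univ i)
      exact h2.ne
    rw [ENNReal.toReal_sum (fun t ht => (ENNReal.lt_top_of_sum_ne_top h ht).ne)]
    refine Finset.sum_congr rfl fun t ht => ?_
    rw [ENNReal.toReal_sum (fun i hi => hterm t ht i)]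
    refine Finset.sum_congr rfl fun i _ => ?_
    have := hterm t ht i
    rw [ENNReal.toReal_add (fun h' => this (by rw [h']; simp)) (fun h' => this (by rw [h']; simp))]
  have hγs_int : Integrable (fun ω => (gammaE m n γp γm a ω).toReal) P := by
    refine Integrable.mono ha.2.2 hg_meas.ennreal_toReal.aestronglyMeasurable ?_
    filter_upwards [hF0fin] with ω h
    rw [Real.norm_eq_abs, Real.norm_eq_abs, abs_of_nonneg ENNReal.toReal_nonneg,
      abs_of_nonneg (Finset.sum_nonneg fun t _ => ENNReal.toReal_nonneg)]
    calc (gammaE m n γp γm a ω).toReal ≤ (costE m c a ω).toReal :=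
          ENNReal.toReal_mono h (hg_le ω)
      _ = ∑ t ∈ Finset.range m, (c t ω (a t ω)).toReal := by
          rw [costE, ENNReal.toReal_sum fun t ht => ENNReal.sum_ne_top.mp h t ht]
  have hIγ : ∫ ω, (gammaE m n γp γm a ω).toReal ∂P
      = (∫⁻ ω, gammaE m n γp γm a ω ∂P).toReal :=
    integral_toReal hg_meas.aemeasurable (hgfin.mono fun ω h => h.lt_top)
  have hegain : ∫ ω, eGain m n Hmid HT γp γm a ω ∂P
      = (∫ ω, linP m n Hmid HT a ω ∂P) - (∫⁻ ω, gammaE m n γp γm a ω ∂P).toReal := by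
    have heq : ∀ᵐ ω ∂P, eGain m n Hmid HT γp γm a ω
        = linP m n Hmid HT a ω - (gammaE m n γp γm a ω).toReal := by
      filter_upwards [hγreal] with ω h
      rw [eGain, linP, ← h, ← Finset.sum_sub_distrib]
    rw [integral_congr_ae heq, integral_sub hlin_int hγs_int, hIγ]
  exact ⟨hlin_int, hgen, hegain,
    lintegral_mono hg_le, hF0⟩

lemma zero_adm {mΩ : MeasurableSpace Ω} (P : Measure Ω) [IsProbabilityMeasure P]
    (m n : ℕ) (F : ℕ → MeasurableSpace Ω) (c : ℕ → Ω → (Fin n → ℝ) → ℝ≥0∞)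
    (hc_zero : ∀ t < m, ∀ ω, c t ω 0 = 0) :
    GenAdmissible P m n F c (fun _ _ => (0 : Fin n → ℝ)) := by
  refine ⟨fun t ht => ⟨measurable_const, 0, Filter.Eventually.of_forall fun ω i => by simp⟩,
    fun t ht => Filter.Eventually.of_forall fun ω => by simp [hc_zero t ht ω], ?_⟩
  have h : (fun ω => ∑ t ∈ Finset.range m, (c t ω ((fun _ _ => (0:Fin n → ℝ)) t ω)).toReal)
      = fun _ => (0:ℝ) := funext fun ω => Finset.sum_eq_zero fun t ht => by
    rw [hc_zero t (Finset.mem_range.mp ht)]; simp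
  rw [h]; exact integrable_const 0

lemma seq_tendsto : Tendsto (fun k : ℕ => 1/((k:ℝ)+1)) atTop (nhdsWithin 0 (Set.Ioi 0)) := by
  apply tendsto_nhdsWithin_of_tendsto_nhds_of_eventually_within _
    tendsto_one_div_add_atTop_nhds_zero_nat
  exact Filter.Eventually.of_forall fun k => Set.mem_Ioi.mpr (by positivity)

lemma transfer_lemma
    {mΩ : MeasurableSpace Ω} (P : Measure Ω) [IsProbabilityMeasure P]
    (m n : ℕ) (F : ℕ → MeasurableSpace Ω) (hF_le : ∀ t, F t ≤ mΩ)
    (Hmid HT : ℕ → Ω → Fin n → ℝ)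
    (hHmid_meas : ∀ t < m, Measurable[F t] (Hmid t))
    (hHT_meas : ∀ t < m, Measurable[F m] (HT t))
    (hHmid_bdd : ∀ t < m, ∃ C : ℝ, ∀ᵐ ω ∂P, ∀ i, |Hmid t ω i| ≤ C)
    (hHT_bdd : ∀ t < m, ∃ C : ℝ, ∀ᵐ ω ∂P, ∀ i, |HT t ω i| ≤ C)
    (c : ℕ → Ω → (Fin n → ℝ) → ℝ≥0∞)
    (hc_meas : ∀ t < m, Measurable (fun q : Ω × (Fin n → ℝ) => c t q.1 q.2))
    (hc_convex : ∀ t < m, ∀ ω, ∀ x y : Fin n → ℝ, ∀ s : ℝ, 0 ≤ s → s ≤ 1 →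
      c t ω (s • x + (1 - s) • y) ≤ ENNReal.ofReal s * c t ω x + ENNReal.ofReal (1 - s) * c t ω y)
    (hc_zero : ∀ t < m, ∀ ω, c t ω 0 = 0)
    (γp γm : ℕ → Ω → Fin n → ℝ≥0∞)
    (hγp_meas : ∀ t < m, Measurable[F t] (γp t)) (hγm_meas : ∀ t < m, Measurable[F t] (γm t))
    (hderiv : ∀ t < m, ∀ ω, ∀ x : Fin n → ℝ,
      Tendsto (fun ε : ℝ => c t ω (ε • x) / ENNReal.ofReal ε) (nhdsWithin 0 (Set.Ioi 0))
        (nhds (∑ i, (γp t ω i * ENNReal.ofReal (max (x i) 0)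
          + γm t ω i * ENNReal.ofReal (max (-x i) 0)))))
    (hscale : ∀ a, GenAdmissible P m n F c a → ∀ s : ℝ, 0 ≤ s → s ≤ 1 →
      GenAdmissible P m n F c (fun t ω => s • a t ω))
    (a : ℕ → Ω → Fin n → ℝ) (ha : GenAdmissible P m n F c a)
    (hpos : 0 < ∫ ω, eGain m n Hmid HT γp γm a ω ∂P) :
    ∃ b, GenAdmissible P m n F c b ∧ 0 < ∫ ω, genGain m n Hmid HT c b ω ∂P := by
  have haM : ∀ t < m, Measurable (a t) := fun t ht => ((ha.1 t ht).1).mono (hF_le t) le_rfl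
  set ε : ℕ → ℝ := fun k => 1/((k:ℝ)+1) with hε
  have hεpos : ∀ k, 0 < ε k := fun k => by positivity
  have hεle1 : ∀ k, ε k ≤ 1 := fun k => by
    rw [hε]; rw [div_le_one (by positivity)]; simp
  set b : ℕ → ℕ → Ω → Fin n → ℝ := fun k => fun t ω => ε k • a t ω with hb
  have hbk : ∀ k, GenAdmissible P m n F c (b k) := fun k =>
    hscale a ha (ε k) (hεpos k).le (hεle1 k)
  have reprA := repr_lemma P m n F hF_le Hmid HT hHmid_meas hHT_meas hHmid_bdd hHT_bdd c
    hc_convex hc_zero γp γm hγp_meas hγm_meas hderiv a ha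
  have reprB := fun k => repr_lemma P m n F hF_le Hmid HT hHmid_meas hHT_meas hHmid_bdd
    hHT_bdd c hc_convex hc_zero γp γm hγp_meas hγm_meas hderiv (b k) (hbk k)
  set L : ℝ := ∫ ω, linP m n Hmid HT a ω ∂P with hL
  -- linear part of b k
  have hlinb : ∀ k, ∀ ω, linP m n Hmid HT (b k) ω = ε k * linP m n Hmid HT a ω := by
    intro k ω
    simp [linP, hb, Finset.mul_sum, mul_assoc]
  have hlinbI : ∀ k, ∫ ω, linP m n Hmid HT (b k) ω ∂P = ε k * L := by
    intro k
    calc ∫ ω, linP m n Hmid HT (b k) ω ∂P = ∫ ω, ε k • linP m n Hmid HT a ω ∂P :=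
          integral_congr_ae (Filter.Eventually.of_forall fun ω => by
            simp only [smul_eq_mul]; rw [hlinb k ω])
      _ = ε k • ∫ ω, linP m n Hmid HT a ω ∂P := integral_smul _ _
      _ = ε k * L := by rw [smul_eq_mul, hL]
  -- the normalized cost functions
  set f : ℕ → Ω → ℝ≥0∞ := fun k ω => ∑ t ∈ Finset.range m,
    c t ω (ε k • a t ω) / ENNReal.ofReal (ε k) with hf
  have hFk_meas : ∀ k, Measurable (costE m c (b k)) := by
    intro k
    apply Finset.measurable_sum
    intro t ht'
    have ht := Finset.mem_range.mp ht'
    exact (hc_meas t ht).comp (measurable_id.prodMk ((haM t ht).const_smul (ε k)))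
  have hfk_meas : ∀ k, Measurable (f k) := by
    intro k
    apply Finset.measurable_sum
    intro t ht'
    have ht := Finset.mem_range.mp ht'
    exact ((hc_meas t ht).comp
      (measurable_id.prodMk ((haM t ht).const_smul (ε k)))).div measurable_const
  have hfk_eq : ∀ k ω, f k ω = (ENNReal.ofReal (ε k))⁻¹ * costE m c (b k) ω := by
    intro k ω
    rw [hf, costE, Finset.mul_sum]
    exact Finset.sum_congr rfl fun t _ => ENNReal.div_eq_inv_mul ..
  have hfk_le : ∀ k, ∀ ω, f k ω ≤ costE m c a ω := by
    intro k ω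
    rw [hf, costE]
    refine Finset.sum_le_sum fun t ht' => ?_
    have ht := Finset.mem_range.mp ht'
    have := scale_div_mono (c t ω) (hc_convex t ht ω) (hc_zero t ht ω) (a t ω)
      (hεpos k) (hεle1 k)
    simpa [ENNReal.ofReal_one] using this
  have hlim : ∀ ω, Tendsto (fun k => f k ω) atTop (nhds (gammaE m n γp γm a ω)) := by
    intro ω
    simp only [gammaE]
    apply tendsto_finset_sum
    intro t ht'
    have ht := Finset.mem_range.mp ht'
    exact (hderiv t ht ω (a t ω)).comp seq_tendsto
  have hDC : Tendsto (fun k => ∫⁻ ω, f k ω ∂P) atTop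
      (nhds (∫⁻ ω, gammaE m n γp γm a ω ∂P)) :=
    tendsto_lintegral_of_dominated_convergence (costE m c a) hfk_meas
      (fun k => Filter.Eventually.of_forall (hfk_le k)) reprA.2.2.2.2
      (Filter.Eventually.of_forall hlim)
  have hGne : (∫⁻ ω, gammaE m n γp γm a ω ∂P) ≠ ∞ :=
    fun h => reprA.2.2.2.2 (top_le_iff.mp (h ▸ reprA.2.2.2.1))
  have hDCr : Tendsto (fun k => (∫⁻ ω, f k ω ∂P).toReal) atTop
      (nhds (∫⁻ ω, gammaE m n γp γm a ω ∂P).toReal) :=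
    (ENNReal.tendsto_toReal hGne).comp hDC
  have hT : Tendsto (fun k => L - (∫⁻ ω, f k ω ∂P).toReal) atTop
      (nhds (L - (∫⁻ ω, gammaE m n γp γm a ω ∂P).toReal)) :=
    tendsto_const_nhds.sub hDCr
  have hpos' : 0 < L - (∫⁻ ω, gammaE m n γp γm a ω ∂P).toReal := by
    rw [hL]; rw [reprA.2.2.1] at hpos; exact hpos
  obtain ⟨k, hk⟩ := (hT.eventually (eventually_gt_nhds hpos')).exists
  refine ⟨b k, hbk k, ?_⟩
  rw [(reprB k).2.1, hlinbI k]
  -- relate lintegral of f k with lintegral of costE (b k)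
  have hlf : ∫⁻ ω, f k ω ∂P = (ENNReal.ofReal (ε k))⁻¹ * ∫⁻ ω, costE m c (b k) ω ∂P := by
    simp_rw [hfk_eq k]
    exact lintegral_const_mul _ (hFk_meas k)
  have hcostk : (∫⁻ ω, costE m c (b k) ω ∂P).toReal = ε k * (∫⁻ ω, f k ω ∂P).toReal := by
    rw [hlf, ENNReal.toReal_mul, ENNReal.toReal_inv, ENNReal.toReal_ofReal (hεpos k).le,
      ← mul_assoc, mul_inv_cancel₀ (hεpos k).ne', one_mul]
  rw [hcostk]
  have := mul_pos (hεpos k) hk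
  linarith [this]


/-- If the generalized costs have marginal (proportional) costs
`γ_t^±` in the sense that `c_t(εa)/ε → γ_t^+·a^+ + γ_t^-·a^-` as `ε ↓ 0`, then the market has
no statistical arbitrage for the linearized gains `G̃` iff it has none for the gains `G`:
`sup_a E[G̃(a)] = 0 ↔ sup_a E[G(a)] = 0`. -/
theorem stmt_7
    {mΩ : MeasurableSpace Ω} (P : Measure Ω) [IsProbabilityMeasure P]
    (m n : ℕ) (F : ℕ → MeasurableSpace Ω) (hF_mono : Monotone F) (hF_le : ∀ t, F t ≤ mΩ)
    (Hmid HT : ℕ → Ω → Fin n → ℝ)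
    (hHmid_meas : ∀ t < m, Measurable[F t] (Hmid t))
    (hHT_meas : ∀ t < m, Measurable[F m] (HT t))
    (hHmid_bdd : ∀ t < m, ∃ C : ℝ, ∀ᵐ ω ∂P, ∀ i, |Hmid t ω i| ≤ C)
    (hHT_bdd : ∀ t < m, ∃ C : ℝ, ∀ᵐ ω ∂P, ∀ i, |HT t ω i| ≤ C)
    (c : ℕ → Ω → (Fin n → ℝ) → ℝ≥0∞)
    (hc_meas : ∀ t < m, Measurable (fun q : Ω × (Fin n → ℝ) => c t q.1 q.2))
    (hc_adapted : ∀ t < m, ∀ x, Measurable[F t] (fun ω => c t ω x))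
    (hc_convex : ∀ t < m, ∀ ω, ∀ x y : Fin n → ℝ, ∀ s : ℝ, 0 ≤ s → s ≤ 1 →
      c t ω (s • x + (1 - s) • y) ≤ ENNReal.ofReal s * c t ω x + ENNReal.ofReal (1 - s) * c t ω y)
    (hc_zero : ∀ t < m, ∀ ω, c t ω 0 = 0)
    (γp γm : ℕ → Ω → Fin n → ℝ≥0∞)
    (hγp_meas : ∀ t < m, Measurable[F t] (γp t)) (hγm_meas : ∀ t < m, Measurable[F t] (γm t))
    (hderiv : ∀ t < m, ∀ ω, ∀ x : Fin n → ℝ,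
      Tendsto (fun ε : ℝ => c t ω (ε • x) / ENNReal.ofReal ε) (nhdsWithin 0 (Set.Ioi 0))
        (nhds (∑ i, (γp t ω i * ENNReal.ofReal (max (x i) 0)
          + γm t ω i * ENNReal.ofReal (max (-x i) 0)))))
    (hscale : ∀ a, GenAdmissible P m n F c a → ∀ s : ℝ, 0 ≤ s → s ≤ 1 →
      GenAdmissible P m n F c (fun t ω => s • a t ω)) :
    (⨆ a : {a : ℕ → Ω → Fin n → ℝ // GenAdmissible P m n F c a},
        ((∫ ω, eGain m n Hmid HT γp γm a.1 ω ∂P : ℝ) : EReal)) = 0 ↔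
      (⨆ a : {a : ℕ → Ω → Fin n → ℝ // GenAdmissible P m n F c a},
        ((∫ ω, genGain m n Hmid HT c a.1 ω ∂P : ℝ) : EReal)) = 0 := by
  have hz : GenAdmissible P m n F c (fun _ _ => (0 : Fin n → ℝ)) := zero_adm P m n F c hc_zero
  have hze : ∫ ω, eGain m n Hmid HT γp γm (fun _ _ => (0 : Fin n → ℝ)) ω ∂P = 0 := by
    have h : ∀ ω, eGain m n Hmid HT γp γm (fun _ _ => (0 : Fin n → ℝ)) ω = 0 := fun ω => by
      simp [eGain]
    simp only [h, integral_zero]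
  have hzg : ∫ ω, genGain m n Hmid HT c (fun _ _ => (0 : Fin n → ℝ)) ω ∂P = 0 := by
    have h : ∀ ω, genGain m n Hmid HT c (fun _ _ => (0 : Fin n → ℝ)) ω = 0 := fun ω => by
      simp only [genGain]
      refine Finset.sum_eq_zero fun t ht => ?_
      rw [hc_zero t (Finset.mem_range.mp ht)]
      simp
    simp only [h, integral_zero]
  have hle : ∀ a : {a : ℕ → Ω → Fin n → ℝ // GenAdmissible P m n F c a},
      ∫ ω, genGain m n Hmid HT c a.1 ω ∂P ≤ ∫ ω, eGain m n Hmid HT γp γm a.1 ω ∂P := by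
    intro a
    obtain ⟨-, hg, he, hle', hfin⟩ := repr_lemma P m n F hF_le Hmid HT hHmid_meas hHT_meas
      hHmid_bdd hHT_bdd c hc_convex hc_zero γp γm hγp_meas hγm_meas hderiv a.1 a.2
    rw [hg, he]
    have := ENNReal.toReal_mono hfin hle'
    linarith
  have h0g : (0 : EReal) ≤ ⨆ a : {a : ℕ → Ω → Fin n → ℝ // GenAdmissible P m n F c a},
      ((∫ ω, genGain m n Hmid HT c a.1 ω ∂P : ℝ) : EReal) := by
    have := le_iSup (fun a : {a : ℕ → Ω → Fin n → ℝ // GenAdmissible P m n F c a} =>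
      ((∫ ω, genGain m n Hmid HT c a.1 ω ∂P : ℝ) : EReal)) ⟨_, hz⟩
    simp only [hzg] at this
    simpa using this
  have h0e : (0 : EReal) ≤ ⨆ a : {a : ℕ → Ω → Fin n → ℝ // GenAdmissible P m n F c a},
      ((∫ ω, eGain m n Hmid HT γp γm a.1 ω ∂P : ℝ) : EReal) := by
    have := le_iSup (fun a : {a : ℕ → Ω → Fin n → ℝ // GenAdmissible P m n F c a} =>
      ((∫ ω, eGain m n Hmid HT γp γm a.1 ω ∂P : ℝ) : EReal)) ⟨_, hz⟩
    simp only [hze] at this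
    simpa using this
  constructor
  · intro hE
    refine le_antisymm (iSup_le fun a => ?_) h0g
    calc ((∫ ω, genGain m n Hmid HT c a.1 ω ∂P : ℝ) : EReal)
        ≤ ((∫ ω, eGain m n Hmid HT γp γm a.1 ω ∂P : ℝ) : EReal) :=
          EReal.coe_le_coe_iff.mpr (hle a)
      _ ≤ ⨆ a : {a : ℕ → Ω → Fin n → ℝ // GenAdmissible P m n F c a},
            ((∫ ω, eGain m n Hmid HT γp γm a.1 ω ∂P : ℝ) : EReal) :=
          le_iSup (fun a : {a : ℕ → Ω → Fin n → ℝ // GenAdmissible P m n F c a} =>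
            ((∫ ω, eGain m n Hmid HT γp γm a.1 ω ∂P : ℝ) : EReal)) a
      _ = 0 := hE
  · intro hG
    refine le_antisymm (iSup_le fun a => ?_) h0e
    by_contra hlt
    push_neg at hlt
    have hpos : 0 < ∫ ω, eGain m n Hmid HT γp γm a.1 ω ∂P := by
      have h0 : ((0:ℝ) : EReal) < ((∫ ω, eGain m n Hmid HT γp γm a.1 ω ∂P : ℝ) : EReal) := by
        simpa using hlt
      exact EReal.coe_lt_coe_iff.mp h0
    obtain ⟨b, hb, hbpos⟩ := transfer_lemma P m n F hF_le Hmid HT hHmid_meas hHT_meas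
      hHmid_bdd hHT_bdd c hc_meas hc_convex hc_zero γp γm hγp_meas hγm_meas hderiv hscale
      a.1 a.2 hpos
    have hle0 : ((∫ ω, genGain m n Hmid HT c b ω ∂P : ℝ) : EReal) ≤ 0 := by
      rw [← hG]
      exact le_iSup (fun a : {a : ℕ → Ω → Fin n → ℝ // GenAdmissible P m n F c a} =>
        ((∫ ω, genGain m n Hmid HT c a.1 ω ∂P : ℝ) : EReal)) ⟨b, hb⟩
    have h1 : ((0:ℝ) : EReal) < ((∫ ω, genGain m n Hmid HT c b ω ∂P : ℝ) : EReal) :=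
      EReal.coe_lt_coe_iff.mpr hbpos
    have h2 : ((0:ℝ) : EReal) < 0 := h1.trans_le hle0
    simp at h2
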